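/- arXiv:1907.00923 — 2 statements merged into one kernel-verified Lean document; each statement's English description precedes it below -/
import Mathlib

section
/- Let Q : ℂ → ℝ ∪ {+∞} be lower semicontinuous and satisfy liminf_{|ζ|→∞} Q(ζ)/(2 log|ζ|) > 1. Then the function ζ ↦ Q(ζ)·e^{−Q(ζ)} (defined to be 0 where Q(ζ) = +∞) is integrable on ℂ with respect to dA; that is, ∫_ℂ Q e^{−Q} dA < ∞. -/
open MeasureTheory Filter Topology
open scoped ENNReal NNReal Real

noncomputable section

/-- Lebesgue measure on `ℂ` divided by `π`. -/
def dA : Measure ℂ := (Real.pi.toNNReal)⁻¹ • (volume : Measure ℂ)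

instance : SigmaFinite dA := by unfold dA; infer_instance

/-- The product measure `dA_n` on `ℂⁿ`. -/
def dAn (n : ℕ) : Measure (Fin n → ℂ) := Measure.pi fun _ => dA

def eToENN (x : EReal) : ℝ≥0∞ := if x = ⊤ then ⊤ else ENNReal.ofReal x.toReal

/-- `e^x ∈ [0,∞]` for extended-real `x`. -/
def eExp (x : EReal) : ℝ≥0∞ :=
  if x = ⊤ then ⊤ else if x = ⊥ then 0 else ENNReal.ofReal (Real.exp x.toReal)

/-- `e^{-t·q}` for extended-real `q`, with the convention that it is `0` when `q = +∞`. -/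
def expNeg (t : ℝ) (q : EReal) : ℝ := if q = ⊤ then 0 else Real.exp (-(t * q.toReal))

/-- Boltzmann weight `e^{-β H}` for `m` particles in the external field `n·Q`, where
`H = Σ_{j≠k} log 1/|ζ_j-ζ_k| + n Σ_j Q(ζ_j)`, with the convention `e^{-βH} = 0`
where `H = +∞`. -/
def boltzW (Q : ℂ → EReal) (β : ℝ) (m n : ℕ) (ζ : Fin m → ℂ) : ℝ :=
  (∏ p ∈ Finset.univ.filter (fun p : Fin m × Fin m => p.1 ≠ p.2),
      dist (ζ p.1) (ζ p.2) ^ β) * ∏ j, expNeg (β * n) (Q (ζ j))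

/-- `e^{-β H_n}`. -/
def boltz (Q : ℂ → EReal) (β : ℝ) (n : ℕ) : (Fin n → ℂ) → ℝ := boltzW Q β n n

/-- The partition function `Z_n^β = ∫ e^{-βH_n} dA_n`. -/
def Zpart (Q : ℂ → EReal) (β : ℝ) (n : ℕ) : ℝ≥0∞ :=
  ∫⁻ ζ, ENNReal.ofReal (boltz Q β n ζ) ∂(dAn n)

/-- The Gibbs measure `P_n^β = Z⁻¹ e^{-βH_n} dA_n`. -/
def gibbs (Q : ℂ → EReal) (β : ℝ) (n : ℕ) : Measure (Fin n → ℂ) :=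
  (Zpart Q β n)⁻¹ • (dAn n).withDensity (fun ζ => ENNReal.ofReal (boltz Q β n ζ))

/-- The normalized Laplacian `ΔQ = (1/4)(Q_xx + Q_yy)` of a (C²) function. -/
def lap (f : ℂ → ℝ) (z : ℂ) : ℝ :=
  (1 / 4) * (iteratedDeriv 2 (fun t : ℝ => f (z + (t : ℂ))) 0 +
    iteratedDeriv 2 (fun t : ℝ => f (z + (t : ℂ) * Complex.I)) 0)

/-- The logarithmic potential `∫ log|z-w| dσ(w)`. -/
def logPot (σ : Measure ℂ) (z : ℂ) : ℝ := ∫ w, Real.log (dist z w) ∂σ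

/-- The effective potential `Q_eff = Q - Q̌` where `Q̌ = 2∫log|z-w|dσ(w) + γ`. -/
def Qeff (Q : ℂ → EReal) (σ : Measure ℂ) (γ : ℝ) (z : ℂ) : EReal :=
  Q z - ((2 * logPot σ z + γ : ℝ) : EReal)

/-- The logarithmic kernel `log 1/|z-w|`, equal to `+∞` on the diagonal. -/
def logKer (z w : ℂ) : EReal :=
  if z = w then ⊤ else ((Real.log (1 / dist z w) : ℝ) : EReal)

/-- EReal-valued integral: `∫ f⁺ - ∫ f⁻`. -/
def eInt {α : Type*} [MeasurableSpace α] (μ : Measure α) (f : α → EReal) : EReal :=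
  ((∫⁻ x, eToENN (f x) ∂μ : ℝ≥0∞) : EReal) - ((∫⁻ x, eToENN (-(f x)) ∂μ : ℝ≥0∞) : EReal)

/-- The logarithmic `Q`-energy `I_Q[μ] = ∬ log 1/|z-w| dμ(z)dμ(w) + ∫ Q dμ`. -/
def energy (Q : ℂ → EReal) (μ : Measure ℂ) : EReal :=
  eInt μ (fun z => eInt μ (fun w => logKer z w)) + eInt μ Q

/-- `Γ` is an everywhere `C¹`-smooth Jordan curve. -/
def IsC1JordanCurve (Γ : Set ℂ) : Prop :=
  ∃ γ : ℝ → ℂ, ContDiff ℝ 1 γ ∧ Function.Periodic γ 1 ∧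
    Set.InjOn γ (Set.Ico 0 1) ∧ (∀ t, deriv γ t ≠ 0) ∧ Γ = γ '' Set.Icc 0 1

/-- The standing assumptions on the external potential `Q`: `Qr` is the real-valued
restriction of `Q` to the interior of its finiteness set, `σ` is the equilibrium measure with
droplet `S = supp σ`, `Q_eff = Q - Q̌ = Q - (2·logPot σ + γ)`, and
`c₀ = min{ΔQ(η) : η ∈ ∂S} > 0`. -/
structure Standing where
  Q : ℂ → EReal
  Qr : ℂ → ℝ
  σ : Measure ℂ
  S : Set ℂ
  γ : ℝ
  c0 : ℝ
  /-- `Q` takes values in `ℝ ∪ {+∞}`. -/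
  hbot : ∀ z, Q z ≠ ⊥
  /-- `Q` is lower semicontinuous. -/
  lsc : LowerSemicontinuous Q
  /-- the finiteness set `Σ = {Q < ∞}` has nonempty interior. -/
  hfin : (interior {z | Q z ≠ ⊤}).Nonempty
  /-- growth condition: `liminf_{ζ→∞} Q(ζ)/(2 log|ζ|) > 1`. -/
  growth : ∃ k : ℝ, 1 < k ∧
    ∀ᶠ z in Filter.cocompact ℂ, ((k * (2 * Real.log ‖z‖) : ℝ) : EReal) ≤ Q z
  /-- `σ` is a Borel probability measure. -/
  probσ : IsProbabilityMeasure σ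
  /-- `S` is the support of `σ`. -/
  hSsupp : ∀ z, z ∈ S ↔ ∀ U : Set ℂ, IsOpen U → z ∈ U → σ U ≠ 0
  /-- the droplet is compact. -/
  compS : IsCompact S
  /-- `σ` minimizes the `Q`-energy among compactly supported probability measures. -/
  minim : ∀ μ : Measure ℂ, IsProbabilityMeasure μ → (∃ K, IsCompact K ∧ μ Kᶜ = 0) →
    energy Q σ ≤ energy Q μ
  /-- `Qr` represents `Q` on the interior of the finiteness set. -/
  hQQr : ∀ z ∈ interior {z | Q z ≠ ⊤}, Q z = (Qr z : EReal)
  /-- `Q` is `C²` on the interior of the finiteness set. -/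
  hC2 : ContDiffOn ℝ 2 Qr (interior {z | Q z ≠ ⊤})
  /-- the droplet is contained in the interior of the finiteness set. -/
  hSsub : S ⊆ interior {z | Q z ≠ ⊤}
  /-- `σ` has density `ΔQ·1_S` with respect to `dA`. -/
  density : σ = dA.withDensity (fun z => ENNReal.ofReal (S.indicator (lap Qr) z))
  /-- `ΔQ > 0` on a neighbourhood of `∂S`. -/
  hlap : ∃ U, IsOpen U ∧ frontier S ⊆ U ∧ ∀ z ∈ U, 0 < lap Qr z
  /-- `∂S` is a finite union of `C¹`-smooth Jordan curves. -/
  hbdry : ∃ (m : ℕ) (Γ : Fin m → Set ℂ), frontier S = ⋃ i, Γ i ∧ ∀ i, IsC1JordanCurve (Γ i)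
  /-- `Q_eff = 0` on `S`. -/
  hQeffS : ∀ z ∈ S, Qeff Q σ γ z = 0
  /-- `Q_eff > 0` off `S`. -/
  hQeffSc : ∀ z ∉ S, 0 < Qeff Q σ γ z
  /-- `c₀ = min{ΔQ(η) : η ∈ ∂S}`. -/
  hc0def : c0 = sInf (lap Qr '' frontier S)
  /-- `c₀ > 0`. -/
  hc0pos : 0 < c0

/-- A lower semicontinuous `EReal`-valued function avoiding `⊥` is bounded below on compacts. -/
lemma lsc_bddBelow_on_compact (Q : ℂ → EReal) (hbot : ∀ z, Q z ≠ ⊥)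
    (lsc : LowerSemicontinuous Q) {K : Set ℂ} (hK : IsCompact K) :
    ∃ b : ℝ, ∀ z ∈ K, (b : EReal) ≤ Q z := by
  have hcover : K ⊆ ⋃ n : ℕ, {z | ((-(n : ℝ) : ℝ) : EReal) < Q z} := by
    intro z _
    have h1 : (⊥ : EReal) < Q z := (hbot z).bot_lt
    obtain ⟨r, hr1, hr2⟩ := EReal.exists_between_coe_real h1
    obtain ⟨n, hn⟩ := exists_nat_ge (-r)
    refine Set.mem_iUnion.2 ⟨n, ?_⟩
    have : ((-(n : ℝ) : ℝ) : EReal) ≤ (r : EReal) := by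
      exact_mod_cast (by linarith : -(n : ℝ) ≤ r)
    exact lt_of_le_of_lt this hr2
  obtain ⟨t, ht⟩ := hK.elim_finite_subcover _
    (fun n : ℕ => lsc.isOpen_preimage (((-(n : ℝ) : ℝ) : EReal))) hcover
  refine ⟨-((t.sup id : ℕ) : ℝ), fun z hz => ?_⟩
  obtain ⟨n, hn, hzn⟩ := Set.mem_iUnion₂.1 (ht hz)
  have hle : (n : ℝ) ≤ ((t.sup id : ℕ) : ℝ) := by exact_mod_cast Finset.le_sup (f := id) hn
  refine le_trans ?_ hzn.le
  exact_mod_cast (by linarith : -((t.sup id : ℕ) : ℝ) ≤ -(n : ℝ))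

lemma texp_le {α t : ℝ} (hα : α < 1) (ht : 0 ≤ t) :
    t * Real.exp (-t) ≤ (1 - α)⁻¹ * Real.exp (-(α * t)) := by
  have h0 : 0 < 1 - α := by linarith
  have h1 : t ≤ (1 - α)⁻¹ * Real.exp ((1 - α) * t) := by
    rw [le_inv_mul_iff₀ h0]
    linarith [Real.add_one_le_exp ((1 - α) * t)]
  calc t * Real.exp (-t) ≤ ((1 - α)⁻¹ * Real.exp ((1 - α) * t)) * Real.exp (-t) :=
        mul_le_mul_of_nonneg_right h1 (Real.exp_pos _).le
    _ = (1 - α)⁻¹ * Real.exp (-(α * t)) := by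
        rw [mul_assoc, ← Real.exp_add]; ring_nf

/-- **Lemma (integrability of `Q e^{-Q}`).** If `Q : ℂ → ℝ ∪ {+∞}` is lower semicontinuous and
`liminf_{ζ→∞} Q(ζ)/(2log|ζ|) > 1`, then `∫ Q e^{-Q} dA < ∞`, with `Q e^{-Q} := 0` on
`{Q = +∞}`. (Note that `(Q z).toReal * exp(-(Q z).toReal)` equals `0` when `Q z = ⊤`.) -/
theorem integrable_Q_exp_neg_Q (Q : ℂ → EReal) (hbot : ∀ z, Q z ≠ ⊥)
    (lsc : LowerSemicontinuous Q)
    (growth : ∃ k : ℝ, 1 < k ∧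
      ∀ᶠ z in Filter.cocompact ℂ, ((k * (2 * Real.log ‖z‖) : ℝ) : EReal) ≤ Q z) :
    Integrable (fun z : ℂ => (Q z).toReal * Real.exp (-(Q z).toReal)) dA := by
  obtain ⟨k, hk1, hgrow⟩ := growth
  obtain ⟨K, hKc, hKP⟩ : ∃ K : Set ℂ, IsCompact K ∧
      ∀ z ∉ K, ((k * (2 * Real.log ‖z‖) : ℝ) : EReal) ≤ Q z := by
    simpa using hasBasis_cocompact.eventually_iff.mp hgrow
  obtain ⟨R₁, hR₁⟩ := hKc.isBounded.subset_closedBall 0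
  set R : ℝ := max R₁ 1 with hRdef
  have hR1 : (1 : ℝ) ≤ R := le_max_right _ _
  obtain ⟨b, hb⟩ := lsc_bddBelow_on_compact Q hbot lsc (isCompact_closedBall (0 : ℂ) R)
  have hkpos : (0 : ℝ) < k := by linarith
  set α : ℝ := (1 + k) / (2 * k) with hαdef
  have hαpos : 0 < α := by positivity
  have hα1 : α < 1 := by rw [hαdef, div_lt_one (by linarith)]; linarith
  have h1α : 0 < 1 - α := by linarith
  have hαk : α * (2 * k) = 1 + k := by rw [hαdef]; field_simp
  set C₀ : ℝ := max (|b| * Real.exp (-b)) 1 with hC₀def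
  have hC₀l : (1 : ℝ) ≤ C₀ := le_max_right _ _
  have hC₀pos : 0 < C₀ := by linarith
  set C : ℝ := C₀ * (1 + R) ^ (1 + k) + (1 - α)⁻¹ * 2 ^ (1 + k) with hCdef
  have hRpowpos : (0 : ℝ) < (1 + R) ^ (1 + k) := Real.rpow_pos_of_pos (by linarith) _
  have h2powpos : (0 : ℝ) < (2 : ℝ) ^ (1 + k) := Real.rpow_pos_of_pos (by norm_num) _
  have hCpos : 0 < C := by
    have := mul_pos hC₀pos hRpowpos
    have := mul_pos (inv_pos.2 h1α) h2powpos
    rw [hCdef]; linarith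
  -- the pointwise bound
  have hbound : ∀ z : ℂ, ‖(Q z).toReal * Real.exp (-(Q z).toReal)‖ ≤
      C * (1 + ‖z‖) ^ (-(1 + k)) := by
    intro z
    have hz1 : (0 : ℝ) < 1 + ‖z‖ := by positivity
    have hpow_pos : 0 < (1 + ‖z‖) ^ (-(1 + k)) := Real.rpow_pos_of_pos hz1 _
    by_cases htop : Q z = ⊤
    · simp only [htop, EReal.toReal_top, zero_mul, norm_zero]
      exact (mul_pos hCpos hpow_pos).le
    have hQt : Q z = (((Q z).toReal : ℝ) : EReal) := (EReal.coe_toReal htop (hbot z)).symm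
    set t : ℝ := (Q z).toReal with htdef
    have hnorm : ‖t * Real.exp (-t)‖ = |t| * Real.exp (-t) := by
      rw [norm_mul, Real.norm_eq_abs, Real.norm_eq_abs, Real.abs_exp]
    by_cases hzR : ‖z‖ ≤ R
    · -- inside the ball: uniform bound C₀
      have hbt : b ≤ t := by
        have h := hb z (by simpa [Metric.mem_closedBall, dist_zero_right] using hzR)
        rw [hQt] at h
        exact_mod_cast h
      have hfC₀ : |t| * Real.exp (-t) ≤ C₀ := by
        rcases le_or_gt t 0 with h | h
        · have hb0 : b ≤ 0 := hbt.trans h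
          have h1 : |t| ≤ |b| := by
            rw [abs_of_nonpos h, abs_of_nonpos hb0]; linarith
          refine le_trans (mul_le_mul h1 (Real.exp_le_exp.2 (by linarith))
            (Real.exp_pos _).le (abs_nonneg b)) (le_max_left _ _)
        · have hte : t ≤ Real.exp t := by linarith [Real.add_one_le_exp t]
          calc |t| * Real.exp (-t) = t * Real.exp (-t) := by rw [abs_of_pos h]
            _ ≤ Real.exp t * Real.exp (-t) :=
                mul_le_mul_of_nonneg_right hte (Real.exp_pos _).le
            _ = 1 := by rw [← Real.exp_add]; simp
            _ ≤ C₀ := hC₀l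
      have hple : (1 + ‖z‖) ^ (1 + k) ≤ (1 + R) ^ (1 + k) :=
        Real.rpow_le_rpow (by positivity) (by linarith) (by linarith)
      have hzpow : (0 : ℝ) < (1 + ‖z‖) ^ (1 + k) := Real.rpow_pos_of_pos hz1 _
      have h2 : C₀ ≤ C₀ * (1 + R) ^ (1 + k) * (1 + ‖z‖) ^ (-(1 + k)) := by
        rw [Real.rpow_neg hz1.le]
        calc C₀ = C₀ * ((1 + ‖z‖) ^ (1 + k) * ((1 + ‖z‖) ^ (1 + k))⁻¹) := by
              rw [mul_inv_cancel₀ (ne_of_gt hzpow), mul_one]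
          _ = C₀ * (1 + ‖z‖) ^ (1 + k) * ((1 + ‖z‖) ^ (1 + k))⁻¹ := by ring
          _ ≤ C₀ * (1 + R) ^ (1 + k) * ((1 + ‖z‖) ^ (1 + k))⁻¹ := by
              gcongr
      rw [hnorm]
      refine le_trans hfC₀ (le_trans h2 ?_)
      have hCge : C₀ * (1 + R) ^ (1 + k) ≤ C := by
        rw [hCdef]
        have := mul_pos (inv_pos.2 h1α) h2powpos
        linarith
      exact mul_le_mul_of_nonneg_right hCge hpow_pos.le
    · -- outside the ball: use the growth bound
      push_neg at hzR
      have hzK : z ∉ K := by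
        intro hzk
        have : ‖z‖ ≤ R₁ := by simpa [Metric.mem_closedBall, dist_zero_right] using hR₁ hzk
        exact absurd (this.trans (le_max_left R₁ 1)) (not_le.2 hzR)
      have hQz := hKP z hzK
      rw [hQt] at hQz
      have habs : ‖z‖ = ‖z‖ := rfl
      have hQreal : k * (2 * Real.log ‖z‖) ≤ t := by rw [← habs]; exact_mod_cast hQz
      have hz1' : (1 : ℝ) < ‖z‖ := lt_of_le_of_lt hR1 hzR
      have hlog : 0 ≤ Real.log ‖z‖ := Real.log_nonneg hz1'.le
      have ht0 : 0 ≤ t := le_trans (by positivity) hQreal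
      have hαt : (1 + k) * Real.log ‖z‖ ≤ α * t := by
        calc (1 + k) * Real.log ‖z‖ = α * (2 * k) * Real.log ‖z‖ := by rw [hαk]
          _ = α * (k * (2 * Real.log ‖z‖)) := by ring
          _ ≤ α * t := mul_le_mul_of_nonneg_left hQreal hαpos.le
      have hzpos : (0 : ℝ) < ‖z‖ := by linarith
      have hzpow : (0 : ℝ) < ‖z‖ ^ (1 + k) := Real.rpow_pos_of_pos hzpos _
      have hstep : ‖z‖ ^ (-(1 + k)) ≤ 2 ^ (1 + k) * (1 + ‖z‖) ^ (-(1 + k)) := by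
        have hb1 : (1 + ‖z‖) ^ (1 + k) ≤ (2 * ‖z‖) ^ (1 + k) :=
          Real.rpow_le_rpow (by positivity) (by linarith) (by linarith)
        have hb2 : ((2 : ℝ) * ‖z‖) ^ (1 + k) = 2 ^ (1 + k) * ‖z‖ ^ (1 + k) :=
          Real.mul_rpow (by norm_num) hzpos.le
        rw [hb2] at hb1
        rw [Real.rpow_neg hzpos.le, Real.rpow_neg hz1.le]
        calc (‖z‖ ^ (1 + k))⁻¹ = 2 ^ (1 + k) * (2 ^ (1 + k) * ‖z‖ ^ (1 + k))⁻¹ := by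
              rw [mul_inv, ← mul_assoc, mul_inv_cancel₀ (ne_of_gt h2powpos), one_mul]
          _ ≤ 2 ^ (1 + k) * ((1 + ‖z‖) ^ (1 + k))⁻¹ := by gcongr
      rw [hnorm, abs_of_nonneg ht0]
      calc t * Real.exp (-t) ≤ (1 - α)⁻¹ * Real.exp (-(α * t)) := texp_le hα1 ht0
        _ ≤ (1 - α)⁻¹ * Real.exp (-((1 + k) * Real.log ‖z‖)) := by
            gcongr
        _ = (1 - α)⁻¹ * ‖z‖ ^ (-(1 + k)) := by
            rw [Real.rpow_def_of_pos hzpos]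
            congr 1
            ring_nf
        _ ≤ (1 - α)⁻¹ * (2 ^ (1 + k) * (1 + ‖z‖) ^ (-(1 + k))) := by
            gcongr
        _ = ((1 - α)⁻¹ * 2 ^ (1 + k)) * (1 + ‖z‖) ^ (-(1 + k)) := by ring
        _ ≤ C * (1 + ‖z‖) ^ (-(1 + k)) := by
            refine mul_le_mul_of_nonneg_right ?_ hpow_pos.le
            rw [hCdef]
            have := mul_pos hC₀pos hRpowpos
            linarith
  -- measurability
  have hQm : Measurable Q := lsc.measurable
  have htm : Measurable fun z => (Q z).toReal := hQm.ereal_toReal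
  have hmeas : Measurable fun z : ℂ => (Q z).toReal * Real.exp (-(Q z).toReal) :=
    htm.mul (Real.measurable_exp.comp htm.neg)
  -- the dominating function is integrable
  have h2k : ((Module.finrank ℝ ℂ : ℝ)) < 1 + k := by
    rw [Complex.finrank_real_complex]; push_cast; linarith
  have hint : Integrable (fun z : ℂ => C * (1 + ‖z‖) ^ (-(1 + k))) (volume : Measure ℂ) :=
    (integrable_one_add_norm h2k).const_mul C
  have hdA : dA = ((Real.pi.toNNReal⁻¹ : ℝ≥0) : ℝ≥0∞) • (volume : Measure ℂ) := by
    rw [dA, ENNReal.smul_def]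
  have hintdA : Integrable (fun z : ℂ => C * (1 + ‖z‖) ^ (-(1 + k))) dA := by
    rw [hdA]
    exact hint.smul_measure ENNReal.coe_ne_top
  exact hintdA.mono' hmeas.aestronglyMeasurable (Filter.Eventually.of_forall hbound)
end
end

section
/- Under the standing assumptions on Q, let (β_n) be a sequence of positive reals with β_n·n/log n → ∞, and define the reduced partition function Z_{n,n−1}^β := ∫_{ℂ^{n−1}} exp(−β[ Σ_{1≤j≠k≤n−1} log(1/|ζ_j−ζ_k|) + n·Σ_{j=1}^{n−1} Q(ζ_j) ]) dA_{n−1} (i.e. n−1 particles in the external field n·Q). Then there exist constants C > 0, h > 0 and n₀ ∈ ℕ such that for all n ≥ n₀, Z_{n,n−1}^{β_n} ≤ C·e^{β_n·h·n}·Z_n^{β_n}. -/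
open MeasureTheory Filter Topology
open scoped ENNReal NNReal Real

noncomputable section

/-! ### Auxiliary lemmas -/

lemma pi_toNNReal_ne : Real.pi.toNNReal ≠ 0 := by
  intro h
  exact Real.pi_ne_zero (by simpa [Real.coe_toNNReal _ Real.pi_pos.le] using congrArg NNReal.toReal h)

lemma pi_toNNReal_coe : ((Real.pi.toNNReal : ℝ≥0) : ℝ≥0∞) = (NNReal.pi : ℝ≥0∞) := by
  norm_cast
  ext
  simp [Real.coe_toNNReal _ Real.pi_pos.le, NNReal.coe_real_pi]

lemma pi_inv_mul : ((Real.pi.toNNReal : ℝ≥0) : ℝ≥0∞)⁻¹ * (NNReal.pi : ℝ≥0∞) = 1 := by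
  rw [pi_toNNReal_coe, ENNReal.inv_mul_cancel]
  · simp only [ne_eq, ENNReal.coe_eq_zero]
    intro h
    exact Real.pi_ne_zero (by simpa [NNReal.coe_real_pi] using congrArg NNReal.toReal h)
  · exact ENNReal.coe_ne_top

lemma dA_apply (s : Set ℂ) : dA s = ((Real.pi.toNNReal : ℝ≥0) : ℝ≥0∞)⁻¹ * volume s := by
  rw [dA, Measure.smul_apply, ENNReal.smul_def, smul_eq_mul, ENNReal.coe_inv pi_toNNReal_ne]

lemma dA_ball (z : ℂ) {r : ℝ} (hr : 0 ≤ r) : dA (Metric.ball z r) = ENNReal.ofReal (r ^ 2) := by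
  rw [dA_apply, Complex.volume_ball, ENNReal.ofReal_pow hr, ← mul_assoc,
    mul_comm _ (ENNReal.ofReal r ^ 2), mul_assoc, pi_inv_mul, mul_one]

lemma dA_closedBall (z : ℂ) {r : ℝ} (hr : 0 ≤ r) :
    dA (Metric.closedBall z r) = ENNReal.ofReal (r ^ 2) := by
  rw [dA_apply, Complex.volume_closedBall, ENNReal.ofReal_pow hr, ← mul_assoc,
    mul_comm _ (ENNReal.ofReal r ^ 2), mul_assoc, pi_inv_mul, mul_one]

lemma dA_singleton (z : ℂ) : dA {z} = 0 := by
  rw [dA_apply]; simp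

instance (n : ℕ) : SigmaFinite (dAn n) := by unfold dAn; infer_instance

lemma measurable_logdist (w : ℂ) : Measurable (fun z : ℂ => Real.log (dist w z)) :=
  Real.measurable_log.comp (continuous_const.dist continuous_id).measurable

/-- The negative part of log dist has lintegral at most 1 on any closed ball. -/
lemma lintegral_neglog_le (w z0 : ℂ) (r : ℝ) :
    (∫⁻ z in Metric.closedBall z0 r, ENNReal.ofReal (max 0 (-(Real.log (dist w z)))) ∂dA) ≤ 1 := by
  set f : ℂ → ℝ := fun z => max 0 (-(Real.log (dist w z))) with hf
  have hm : Measurable f := measurable_const.max (measurable_logdist w).neg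
  have hrw := lintegral_eq_lintegral_meas_lt (μ := dA.restrict (Metric.closedBall z0 r)) (f := f)
    (Eventually.of_forall fun z => le_max_left _ _) hm.aemeasurable
  rw [show (∫⁻ z in Metric.closedBall z0 r, ENNReal.ofReal (max 0 (-(Real.log (dist w z)))) ∂dA)
      = ∫⁻ t in Set.Ioi (0:ℝ), (dA.restrict (Metric.closedBall z0 r)) {z | t < f z} from hrw]
  have step : (∫⁻ t in Set.Ioi (0:ℝ), (dA.restrict (Metric.closedBall z0 r)) {z | t < f z})
      ≤ ∫⁻ t in Set.Ioi (0:ℝ), ENNReal.ofReal (Real.exp (-t)) := by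
    apply lintegral_mono_ae
    rw [ae_restrict_iff' measurableSet_Ioi]
    refine Eventually.of_forall fun t ht => ?_
    have ht0 : (0:ℝ) < t := ht
    have hsub : {z : ℂ | t < f z} ⊆ Metric.ball w (Real.exp (-t)) := by
      intro z hz
      have hz' : t < f z := hz
      have hlog : Real.log (dist w z) < -t := by
        rcases lt_max_iff.mp hz' with h | h
        · exact absurd h (not_lt.mpr ht0.le)
        · linarith
      rcases eq_or_lt_of_le (dist_nonneg : (0:ℝ) ≤ dist w z) with he | hpos
      · have : dist z w = 0 := by rw [dist_comm]; exact he.symm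
        simp [Metric.mem_ball, this, Real.exp_pos]
      · have hd : dist w z < Real.exp (-t) := (Real.log_lt_iff_lt_exp hpos).mp hlog
        simpa [Metric.mem_ball, dist_comm] using hd
    calc (dA.restrict (Metric.closedBall z0 r)) {z | t < f z}
        ≤ dA {z | t < f z} := Measure.restrict_le_self _
      _ ≤ dA (Metric.ball w (Real.exp (-t))) := measure_mono hsub
      _ = ENNReal.ofReal (Real.exp (-t) ^ 2) := dA_ball w (Real.exp_pos _).le
      _ ≤ ENNReal.ofReal (Real.exp (-t)) := by
          apply ENNReal.ofReal_le_ofReal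
          have h1 : Real.exp (-t) ≤ 1 := Real.exp_le_one_iff.mpr (by linarith)
          nlinarith [Real.exp_pos (-t)]
  refine step.trans ?_
  have hint : IntegrableOn (fun t : ℝ => Real.exp (-t)) (Set.Ioi (0:ℝ)) := by
    simpa using exp_neg_integrableOn_Ioi 0 (by norm_num : (0:ℝ) < 1)
  rw [← ofReal_integral_eq_lintegral_ofReal hint
    (Eventually.of_forall fun t => (Real.exp_pos _).le)]
  rw [integral_exp_neg_Ioi_zero]
  simp

/-- log dist is integrable on closed balls. -/
lemma integrableOn_logdist (w z0 : ℂ) {r : ℝ} (hr : 0 < r) :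
    IntegrableOn (fun z => Real.log (dist w z)) (Metric.closedBall z0 r) dA := by
  set R : ℝ := dist w z0 + r with hR
  have hR0 : 0 < R := by have := dist_nonneg (x := w) (y := z0); linarith
  constructor
  · exact (measurable_logdist w).aestronglyMeasurable
  · rw [hasFiniteIntegral_iff_norm]
    have hbound : ∀ z ∈ Metric.closedBall z0 r,
        ‖Real.log (dist w z)‖ ≤ max 0 (-(Real.log (dist w z))) + max 0 (Real.log R) := by
      intro z hz
      have hdle : dist w z ≤ R := by
        have := dist_triangle w z0 z
        have hz' : dist z0 z ≤ r := by rw [dist_comm]; exact hz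
        linarith
      have hlogle : Real.log (dist w z) ≤ max 0 (Real.log R) := by
        rcases eq_or_lt_of_le (dist_nonneg : (0:ℝ) ≤ dist w z) with he | hpos
        · rw [← he, Real.log_zero]; exact le_max_left _ _
        · exact le_max_of_le_right (Real.log_le_log hpos hdle)
      rw [Real.norm_eq_abs, abs_le]
      constructor
      · have : -(Real.log (dist w z)) ≤ max 0 (-(Real.log (dist w z))) := le_max_right _ _
        have h0 : (0:ℝ) ≤ max 0 (Real.log R) := le_max_left _ _
        linarith
      · have h0 : (0:ℝ) ≤ max 0 (-(Real.log (dist w z))) := le_max_left _ _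
        linarith
    calc (∫⁻ z in Metric.closedBall z0 r, ENNReal.ofReal ‖Real.log (dist w z)‖ ∂dA)
        ≤ ∫⁻ z in Metric.closedBall z0 r,
            (ENNReal.ofReal (max 0 (-(Real.log (dist w z))))
              + ENNReal.ofReal (max 0 (Real.log R))) ∂dA := by
          apply lintegral_mono_ae
          rw [ae_restrict_iff' measurableSet_closedBall]
          refine Eventually.of_forall fun z hz => ?_
          rw [← ENNReal.ofReal_add (le_max_left _ _) (le_max_left _ _)]
          exact ENNReal.ofReal_le_ofReal (hbound z hz)
      _ = (∫⁻ z in Metric.closedBall z0 r, ENNReal.ofReal (max 0 (-(Real.log (dist w z)))) ∂dA)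
            + ENNReal.ofReal (max 0 (Real.log R)) * dA (Metric.closedBall z0 r) := by
          rw [lintegral_add_right _ measurable_const, lintegral_const,
            Measure.restrict_apply_univ]
      _ < ⊤ := by
          apply ENNReal.add_lt_top.mpr
          constructor
          · exact lt_of_le_of_lt (lintegral_neglog_le w z0 r) ENNReal.one_lt_top
          · rw [dA_closedBall z0 hr.le]
            exact ENNReal.mul_lt_top ENNReal.ofReal_lt_top ENNReal.ofReal_lt_top

/-- Key lower bound: the integral of log dist over a closed ball is at least -1 (in dA units). -/
lemma setIntegral_logdist_ge (w z0 : ℂ) {r : ℝ} (hr : 0 < r) :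
    -1 ≤ ∫ z in Metric.closedBall z0 r, Real.log (dist w z) ∂dA := by
  set g : ℂ → ℝ := fun z => max 0 (-(Real.log (dist w z))) with hg
  have hgm : Measurable g := measurable_const.max (measurable_logdist w).neg
  have hgi : IntegrableOn g (Metric.closedBall z0 r) dA := by
    constructor
    · exact hgm.aestronglyMeasurable
    · rw [hasFiniteIntegral_iff_norm]
      have : ∀ z : ℂ, ENNReal.ofReal ‖g z‖ = ENNReal.ofReal (g z) := by
        intro z; rw [Real.norm_eq_abs, abs_of_nonneg (le_max_left _ _)]
      simp_rw [this]
      exact lt_of_le_of_lt (lintegral_neglog_le w z0 r) ENNReal.one_lt_top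
  have hineq : ∀ z : ℂ, -(g z) ≤ Real.log (dist w z) := by
    intro z
    simp only [hg]
    linarith [le_max_right (0:ℝ) (-(Real.log (dist w z)))]
  have hmono : (∫ z in Metric.closedBall z0 r, -(g z) ∂dA)
      ≤ ∫ z in Metric.closedBall z0 r, Real.log (dist w z) ∂dA :=
    integral_mono hgi.neg (integrableOn_logdist w z0 hr) hineq
  have hgle : (∫ z in Metric.closedBall z0 r, g z ∂dA) ≤ 1 := by
    rw [integral_eq_lintegral_of_nonneg_ae (f := g) (Eventually.of_forall fun z => le_max_left _ _)
      hgm.aestronglyMeasurable.restrict]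
    calc (∫⁻ z in Metric.closedBall z0 r, ENNReal.ofReal (g z) ∂dA).toReal
        ≤ (1 : ℝ≥0∞).toReal := ENNReal.toReal_mono (by simp) (lintegral_neglog_le w z0 r)
      _ = 1 := by simp
  rw [integral_neg] at hmono
  linarith

/-- Jensen's inequality applied to the product of powers of distances. -/
lemma key_jensen (z0 : ℂ) {r : ℝ} (hr : 0 < r) {β : ℝ} (hβ : 0 < β) (m : ℕ) (ξ : Fin m → ℂ) :
    ENNReal.ofReal (r ^ 2 * Real.exp (-(2 * β * m) / r ^ 2)) ≤
      ∫⁻ z in Metric.closedBall z0 r, ENNReal.ofReal (∏ j, dist (ξ j) z ^ (2 * β)) ∂dA := by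
  set B := Metric.closedBall z0 r with hB
  set μ := dA.restrict B with hμ
  have hμuniv : μ Set.univ = ENNReal.ofReal (r ^ 2) := by
    rw [hμ, Measure.restrict_apply_univ, dA_closedBall z0 hr.le]
  have hr2 : (0:ℝ) < r ^ 2 := by positivity
  haveI : IsFiniteMeasure μ := ⟨by rw [hμuniv]; exact ENNReal.ofReal_lt_top⟩
  haveI : NeZero μ := ⟨fun h => by
    rw [h] at hμuniv
    simp only [Measure.coe_zero, Pi.zero_apply] at hμuniv
    exact absurd hμuniv.symm (by simpa using (ENNReal.ofReal_pos.mpr hr2).ne')⟩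
  set f : ℂ → ℝ := fun z => ∑ j, 2 * β * Real.log (dist (ξ j) z) with hf
  have hfm : Measurable f := by
    apply Finset.measurable_sum
    intro j _
    exact (measurable_logdist (ξ j)).const_mul _
  have hfi : Integrable f μ := by
    apply integrable_finset_sum
    intro j _
    exact ((integrableOn_logdist (ξ j) z0 hr).const_mul _)
  set K : ℝ := ∑ j, 2 * β * max 0 (Real.log (dist (ξ j) z0 + r)) with hK
  have hfK : ∀ z ∈ B, f z ≤ K := by
    intro z hz
    apply Finset.sum_le_sum
    intro j _
    have hdle : dist (ξ j) z ≤ dist (ξ j) z0 + r := by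
      have := dist_triangle (ξ j) z0 z
      have hz' : dist z0 z ≤ r := by rw [dist_comm]; exact hz
      linarith
    have : Real.log (dist (ξ j) z) ≤ max 0 (Real.log (dist (ξ j) z0 + r)) := by
      rcases eq_or_lt_of_le (dist_nonneg : (0:ℝ) ≤ dist (ξ j) z) with he | hpos
      · rw [← he, Real.log_zero]; exact le_max_left _ _
      · exact le_max_of_le_right (Real.log_le_log hpos hdle)
    nlinarith [this, hβ.le]
  have hgi : Integrable (fun z => Real.exp (f z)) μ := by
    apply Integrable.mono' (integrable_const (Real.exp K))
    · exact (Real.measurable_exp.comp hfm).aestronglyMeasurable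
    · rw [hμ, ae_restrict_iff' measurableSet_closedBall]
      refine Eventually.of_forall fun z hz => ?_
      rw [Real.norm_eq_abs, abs_of_nonneg (Real.exp_pos _).le]
      exact Real.exp_le_exp.mpr (hfK z hz)
  have jensen : Real.exp (⨍ z, f z ∂μ) ≤ ⨍ z, Real.exp (f z) ∂μ :=
    convexOn_exp.map_average_le Real.continuous_exp.continuousOn isClosed_univ
      (Eventually.of_forall fun _ => Set.mem_univ _) hfi hgi
  have hintf : -(2 * β * m) ≤ ∫ z, f z ∂μ := by
    rw [hf, integral_finset_sum _ (fun j _ => (integrableOn_logdist (ξ j) z0 hr).const_mul _)]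
    have hterm : ∀ j : Fin m, -(2 * β) ≤ ∫ z, 2 * β * Real.log (dist (ξ j) z) ∂μ := by
      intro j
      rw [integral_const_mul]
      nlinarith [setIntegral_logdist_ge (ξ j) z0 hr, hβ]
    calc -(2 * β * (m:ℝ)) = ∑ _j : Fin m, -(2*β) := by
          simp [Finset.sum_const]
          ring
      _ ≤ _ := Finset.sum_le_sum fun j _ => hterm j
  have havg : -(2 * β * m) / r ^ 2 ≤ ⨍ z, f z ∂μ := by
    rw [average_eq, measureReal_def, hμuniv, ENNReal.toReal_ofReal hr2.le, smul_eq_mul, div_eq_inv_mul]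
    exact mul_le_mul_of_nonneg_left hintf (by positivity)
  set N : Set ℂ := ⋃ j, {ξ j} with hN
  have hNnull : μ N = 0 := by
    have : dA N = 0 := measure_iUnion_null fun j => dA_singleton (ξ j)
    exact le_antisymm (le_trans (Measure.restrict_le_self _) this.le) (by simp)
  have hae : (fun z => Real.exp (f z)) =ᵐ[μ] fun z => ∏ j, dist (ξ j) z ^ (2 * β) := by
    rw [Filter.eventuallyEq_iff_exists_mem]
    refine ⟨Nᶜ, ?_, ?_⟩
    · rw [mem_ae_iff, compl_compl]; exact hNnull
    · intro z hz
      have hzpos : ∀ j : Fin m, 0 < dist (ξ j) z := by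
        intro j
        rcases eq_or_lt_of_le (dist_nonneg : (0:ℝ) ≤ dist (ξ j) z) with he | hpos
        · exfalso
          apply hz
          rw [hN]
          refine Set.mem_iUnion.mpr ⟨j, ?_⟩
          have h2 : ξ j = z := dist_eq_zero.mp he.symm
          exact Set.mem_singleton_iff.mpr h2.symm
        · exact hpos
      show Real.exp (∑ j, 2 * β * Real.log (dist (ξ j) z)) = ∏ j, dist (ξ j) z ^ (2 * β)
      rw [Real.exp_sum]
      apply Finset.prod_congr rfl
      intro j _
      rw [Real.rpow_def_of_pos (hzpos j), mul_comm (Real.log _)]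
  have hprod_int : Integrable (fun z => ∏ j, dist (ξ j) z ^ (2 * β)) μ := hgi.congr hae
  have heq : (∫ z, Real.exp (f z) ∂μ) = ∫ z, ∏ j, dist (ξ j) z ^ (2 * β) ∂μ :=
    integral_congr_ae hae
  have hfinal : r ^ 2 * Real.exp (-(2 * β * m) / r ^ 2) ≤ ∫ z, ∏ j, dist (ξ j) z ^ (2 * β) ∂μ := by
    have h1 : Real.exp (-(2 * β * m) / r ^ 2) ≤ ⨍ z, Real.exp (f z) ∂μ :=
      le_trans (Real.exp_le_exp.mpr havg) jensen
    rw [average_eq, measureReal_def, hμuniv, ENNReal.toReal_ofReal hr2.le, smul_eq_mul] at h1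
    rw [← heq]
    calc r ^ 2 * Real.exp (-(2 * β * m) / r ^ 2)
        ≤ r ^ 2 * ((r ^ 2)⁻¹ * ∫ z, Real.exp (f z) ∂μ) :=
          mul_le_mul_of_nonneg_left h1 hr2.le
      _ = ∫ z, Real.exp (f z) ∂μ := by field_simp
  have hnn : 0 ≤ᵐ[μ] fun z => ∏ j, dist (ξ j) z ^ (2 * β) :=
    Eventually.of_forall fun z => Finset.prod_nonneg fun j _ => Real.rpow_nonneg dist_nonneg _
  rw [← ofReal_integral_eq_lintegral_ofReal hprod_int hnn]
  exact ENNReal.ofReal_le_ofReal hfinal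

lemma expNeg_nonneg (t : ℝ) (q : EReal) : 0 ≤ expNeg t q := by
  unfold expNeg; split
  · exact le_refl 0
  · exact (Real.exp_pos _).le

lemma boltzW_nonneg (Q : ℂ → EReal) (β : ℝ) (m n : ℕ) (ζ : Fin m → ℂ) :
    0 ≤ boltzW Q β m n ζ :=
  mul_nonneg (Finset.prod_nonneg fun p _ => Real.rpow_nonneg dist_nonneg _)
    (Finset.prod_nonneg fun j _ => expNeg_nonneg _ _)

lemma measurable_expNeg_comp {Q : ℂ → EReal} (hQ : Measurable Q) (t : ℝ) :
    Measurable (fun z => expNeg t (Q z)) := by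
  unfold expNeg
  apply Measurable.ite
  · exact hQ (measurableSet_singleton ⊤)
  · exact measurable_const
  · exact Real.measurable_exp.comp ((hQ.ereal_toReal.const_mul t).neg)

lemma measurable_boltzW {Q : ℂ → EReal} (hQ : Measurable Q) {β : ℝ} (hβ : 0 ≤ β) (m n : ℕ) :
    Measurable (boltzW Q β m n) := by
  unfold boltzW
  apply Measurable.mul
  · apply Finset.measurable_prod
    intro p _
    exact (Real.continuous_rpow_const hβ).measurable.comp
      ((measurable_pi_apply p.1).dist (measurable_pi_apply p.2))
  · apply Finset.measurable_prod
    intro j _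
    exact (measurable_expNeg_comp hQ _).comp (measurable_pi_apply j)

lemma rpow_two_mul {d : ℝ} (hd : 0 ≤ d) {β : ℝ} (hβ : 0 < β) :
    d ^ β * d ^ β = d ^ (2 * β) := by
  rw [two_mul, Real.rpow_add' hd (by positivity)]

/-- Factorization of the Boltzmann weight when inserting a particle at the last index. -/
lemma boltz_insertNth (Q : ℂ → EReal) {β : ℝ} (hβ : 0 < β) (m : ℕ) (z : ℂ) (ξ : Fin m → ℂ) :
    boltz Q β (m + 1) ((Fin.last m).insertNth z ξ) =
      boltzW Q β m (m + 1) ξ *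
        ((∏ j, dist (ξ j) z ^ (2 * β)) * expNeg (β * (m + 1)) (Q z)) := by
  set ζ : Fin (m + 1) → ℂ := (Fin.last m).insertNth z ξ with hζ
  have hlast : ζ (Fin.last m) = z := Fin.insertNth_apply_same _ _ _
  have hcast : ∀ j : Fin m, ζ j.castSucc = ξ j := by
    intro j
    have : (Fin.last m).succAbove j = j.castSucc := by rw [Fin.succAbove_last]
    rw [hζ, ← this, Fin.insertNth_apply_succAbove]
  have hpair :
      (∏ p ∈ Finset.univ.filter (fun p : Fin (m+1) × Fin (m+1) => p.1 ≠ p.2),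
        dist (ζ p.1) (ζ p.2) ^ β)
      = (∏ p ∈ Finset.univ.filter (fun p : Fin m × Fin m => p.1 ≠ p.2),
          dist (ξ p.1) (ξ p.2) ^ β) * ∏ j, dist (ξ j) z ^ (2 * β) := by
    have expand : ∀ (k : ℕ) (η : Fin k → ℂ),
        (∏ p ∈ Finset.univ.filter (fun p : Fin k × Fin k => p.1 ≠ p.2),
          dist (η p.1) (η p.2) ^ β)
        = ∏ j : Fin k, ∏ l : Fin k, (if j ≠ l then dist (η j) (η l) ^ β else 1) := by
      intro k η
      rw [Finset.prod_filter, Fintype.prod_prod_type]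
    rw [expand, expand]
    rw [Fin.prod_univ_castSucc (fun j : Fin (m+1) =>
      ∏ l : Fin (m+1), (if j ≠ l then dist (ζ j) (ζ l) ^ β else 1))]
    have inner : ∀ j : Fin (m+1),
        (∏ l : Fin (m+1), (if j ≠ l then dist (ζ j) (ζ l) ^ β else 1))
        = (∏ l : Fin m, (if j ≠ l.castSucc then dist (ζ j) (ζ l.castSucc) ^ β else 1)) *
            (if j ≠ Fin.last m then dist (ζ j) (ζ (Fin.last m)) ^ β else 1) := by
      intro j
      exact Fin.prod_univ_castSucc _
    simp only [inner]
    have hne : ∀ j : Fin m, j.castSucc ≠ Fin.last m := fun j => (Fin.castSucc_lt_last j).ne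
    have hcs : ∀ j l : Fin m, (j.castSucc ≠ l.castSucc) = (j ≠ l) := by
      intro j l
      simp [Fin.castSucc_inj]
    rw [Finset.prod_mul_distrib]
    simp only [hcs, hlast, hcast, hne, if_true, ne_eq, not_true_eq_false, if_false,
      if_neg (not_not.mpr rfl)]
    have h2 : ∀ x : Fin m, ¬ ((Fin.last m : Fin (m+1)) = x.castSucc) := fun x h => hne x h.symm
    simp only [h2, not_false_eq_true, if_true, mul_one]
    rw [mul_assoc]
    congr 1
    rw [← Finset.prod_mul_distrib]
    apply Finset.prod_congr rfl
    intro j _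
    rw [dist_comm z (ξ j)]
    exact rpow_two_mul dist_nonneg hβ
  have hfield : (∏ j : Fin (m+1), expNeg (β * (m+1)) (Q (ζ j)))
      = (∏ j : Fin m, expNeg (β * (m+1)) (Q (ξ j))) * expNeg (β * (m+1)) (Q z) := by
    rw [Fin.prod_univ_castSucc (fun j : Fin (m+1) => expNeg (β * (m+1)) (Q (ζ j)))]
    simp only [hcast, hlast]
  show boltzW Q β (m+1) (m+1) ζ = _
  unfold boltzW
  push_cast
  rw [hpair, hfield]
  ring

/-- **Partition function ratio bound.** Under the standing assumptions on `Q`, if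
`β_n·n/log n → ∞`, and `Z_{n,n-1}^β` denotes the partition function of `n-1` particles in the
external field `n·Q`, then there are `C, h > 0` and `n₀` with
`Z_{n,n-1}^{β_n} ≤ C e^{β_n h n} Z_n^{β_n}` for all `n ≥ n₀`. -/
theorem reduced_partition_ratio (A : Standing) (β : ℕ → ℝ) (hβ : ∀ n, 0 < β n)
    (hβn : Filter.Tendsto (fun n : ℕ => β n * n / Real.log n) Filter.atTop Filter.atTop) :
    ∃ C h : ℝ, 0 < C ∧ 0 < h ∧ ∃ n₀ : ℕ, ∀ n : ℕ, n₀ ≤ n →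
      (∫⁻ ζ, ENNReal.ofReal (boltzW A.Q (β n) (n - 1) n ζ) ∂(dAn (n - 1)))
        ≤ ENNReal.ofReal (C * Real.exp (β n * h * n)) * Zpart A.Q (β n) n := by
  have hQm : Measurable A.Q := A.lsc.measurable
  obtain ⟨z1, hz1⟩ := A.hfin
  obtain ⟨ε, hε, hball⟩ := Metric.isOpen_iff.mp isOpen_interior z1 hz1
  set r : ℝ := ε / 2 with hrdef
  have hr : 0 < r := by positivity
  have hr2 : (0:ℝ) < r ^ 2 := by positivity
  have hBsub : Metric.closedBall z1 r ⊆ interior {z | A.Q z ≠ ⊤} := by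
    refine (Metric.closedBall_subset_ball ?_).trans hball
    rw [hrdef]; linarith
  have hcont : ContinuousOn A.Qr (Metric.closedBall z1 r) := A.hC2.continuousOn.mono hBsub
  obtain ⟨M, hM⟩ := (isCompact_closedBall z1 r).exists_bound_of_continuousOn hcont
  have hM0 : 0 ≤ M := le_trans (norm_nonneg _) (hM z1 (Metric.mem_closedBall_self hr.le))
  set hh : ℝ := M + 2 / r ^ 2 + 1 with hhdef
  have hhpos : 0 < hh := by positivity
  refine ⟨(r ^ 2)⁻¹, hh, by positivity, hhpos, 1, ?_⟩
  intro n hn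
  obtain ⟨m, rfl⟩ : ∃ m, n = m + 1 := ⟨n - 1, (Nat.succ_pred_eq_of_pos hn).symm⟩
  simp only [Nat.add_sub_cancel, Nat.succ_sub_one]
  set b : ℝ := β (m + 1) with hbdef
  have hb : 0 < b := hβ (m + 1)
  have hbm1 : (0:ℝ) < b * ((m:ℝ) + 1) := by positivity
  set B := Metric.closedBall z1 r with hBdef
  -- the measurable equivalence removing the last particle
  set e := MeasurableEquiv.piFinSuccAbove (fun _ : Fin (m + 1) => ℂ) (Fin.last m) with he
  have hesymm : ∀ p : ℂ × (Fin m → ℂ), e.symm p = (Fin.last m).insertNth p.1 p.2 := by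
    intro p; simp [he, MeasurableEquiv.piFinSuccAbove, Fin.insertNthEquiv]
  have hmp := measurePreserving_piFinSuccAbove (fun _ : Fin (m + 1) => dA) (Fin.last m)
  have hbmeas : Measurable fun p : ℂ × (Fin m → ℂ) =>
      ENNReal.ofReal (boltz A.Q b (m + 1) ((Fin.last m).insertNth p.1 p.2)) := by
    apply Measurable.ennreal_ofReal
    apply (measurable_boltzW hQm hb.le (m + 1) (m + 1)).comp
    have hfe : (fun p : ℂ × (Fin m → ℂ) => (Fin.last m).insertNth p.1 p.2)
        = fun p => e.symm p := by funext p; rw [hesymm]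
    rw [hfe]; exact e.symm.measurable
  have hZeq : Zpart A.Q b (m + 1)
      = ∫⁻ p : ℂ × (Fin m → ℂ),
          ENNReal.ofReal (boltz A.Q b (m + 1) ((Fin.last m).insertNth p.1 p.2))
          ∂(dA.prod (dAn m)) := by
    have key := hmp.lintegral_comp hbmeas
    rw [Zpart]
    refine Eq.trans ?_ key
    apply lintegral_congr
    intro ζ
    congr 2
    have h3 := e.symm_apply_apply ζ
    rw [hesymm] at h3
    exact h3.symm
  -- factorize and use Tonelli
  have hZ2 : Zpart A.Q b (m + 1)
      = ∫⁻ ξ : Fin m → ℂ, ∫⁻ z : ℂ,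
          ENNReal.ofReal (boltzW A.Q b m (m + 1) ξ) *
            ENNReal.ofReal ((∏ j, dist (ξ j) z ^ (2 * b)) * expNeg (b * (m + 1)) (A.Q z))
          ∂dA ∂(dAn m) := by
    rw [hZeq, lintegral_prod_symm _ hbmeas.aemeasurable]
    apply lintegral_congr
    intro ξ
    apply lintegral_congr
    intro z
    rw [boltz_insertNth A.Q hb m z ξ,
      ENNReal.ofReal_mul (boltzW_nonneg A.Q b m (m + 1) ξ)]
  -- inner lower bound
  have hinner : ∀ ξ : Fin m → ℂ,
      ENNReal.ofReal (r ^ 2 * Real.exp (-(b * hh * ((m:ℝ) + 1)))) *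
          ENNReal.ofReal (boltzW A.Q b m (m + 1) ξ)
        ≤ ∫⁻ z : ℂ,
            ENNReal.ofReal (boltzW A.Q b m (m + 1) ξ) *
              ENNReal.ofReal ((∏ j, dist (ξ j) z ^ (2 * b)) * expNeg (b * (m + 1)) (A.Q z))
            ∂dA := by
    intro ξ
    rw [lintegral_const_mul' (ENNReal.ofReal (boltzW A.Q b m (m + 1) ξ)) _
      ENNReal.ofReal_ne_top]
    rw [mul_comm (ENNReal.ofReal (r ^ 2 * Real.exp (-(b * hh * ((m:ℝ) + 1)))))]
    apply mul_le_mul_right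
    -- it remains to bound the inner integral from below
    calc ENNReal.ofReal (r ^ 2 * Real.exp (-(b * hh * ((m:ℝ) + 1))))
        ≤ ENNReal.ofReal (Real.exp (-(b * ((m:ℝ) + 1) * M))) *
            ENNReal.ofReal (r ^ 2 * Real.exp (-(2 * b * m) / r ^ 2)) := by
          rw [← ENNReal.ofReal_mul (Real.exp_pos _).le]
          apply ENNReal.ofReal_le_ofReal
          rw [show Real.exp (-(b * ((m:ℝ) + 1) * M)) * (r ^ 2 * Real.exp (-(2 * b * m) / r ^ 2))
              = r ^ 2 * (Real.exp (-(b * ((m:ℝ) + 1) * M)) * Real.exp (-(2 * b * m) / r ^ 2))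
            from by ring, ← Real.exp_add]
          apply mul_le_mul_of_nonneg_left _ hr2.le
          apply Real.exp_le_exp.mpr
          have e1 : 2 * b * (m:ℝ) / r ^ 2 ≤ 2 * b * ((m:ℝ) + 1) / r ^ 2 := by
            apply div_le_div_of_nonneg_right ?_ hr2.le
            · nlinarith [hb.le]
          have e2 : b * hh * ((m:ℝ) + 1)
              = b * ((m:ℝ) + 1) * M + 2 * b * ((m:ℝ) + 1) / r ^ 2 + b * ((m:ℝ) + 1) := by
            rw [hhdef]; field_simp
          have e3 : -(2 * b * (m:ℝ)) / r ^ 2 = -(2 * b * (m:ℝ) / r ^ 2) := by ring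
          rw [e3, e2]
          linarith [hbm1.le]
      _ ≤ ENNReal.ofReal (Real.exp (-(b * ((m:ℝ) + 1) * M))) *
            ∫⁻ z in B, ENNReal.ofReal (∏ j, dist (ξ j) z ^ (2 * b)) ∂dA :=
          mul_le_mul_right (key_jensen z1 hr hb m ξ) _
      _ = ∫⁻ z in B, ENNReal.ofReal (Real.exp (-(b * ((m:ℝ) + 1) * M))) *
            ENNReal.ofReal (∏ j, dist (ξ j) z ^ (2 * b)) ∂dA :=
          (lintegral_const_mul' _ _ ENNReal.ofReal_ne_top).symm
      _ ≤ ∫⁻ z in B,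
            ENNReal.ofReal ((∏ j, dist (ξ j) z ^ (2 * b)) * expNeg (b * (m + 1)) (A.Q z))
            ∂dA := by
          apply lintegral_mono_ae
          rw [ae_restrict_iff' measurableSet_closedBall]
          refine Eventually.of_forall fun z hz => ?_
          rw [← ENNReal.ofReal_mul (Real.exp_pos _).le]
          apply ENNReal.ofReal_le_ofReal
          have hQz : A.Q z = ((A.Qr z : ℝ) : EReal) := A.hQQr z (hBsub hz)
          have hexp : expNeg (b * (m + 1)) (A.Q z)
              = Real.exp (-(b * ((m:ℝ) + 1) * A.Qr z)) := by
            rw [expNeg, hQz]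
            rw [if_neg (by exact fun hcon => EReal.coe_ne_top _ hcon)]
            rw [EReal.toReal_coe]
          have hQrM : A.Qr z ≤ M :=
            le_trans (le_abs_self _) (by rw [← Real.norm_eq_abs]; exact hM z hz)
          have hee : Real.exp (-(b * ((m:ℝ) + 1) * M))
              ≤ expNeg (b * (m + 1)) (A.Q z) := by
            rw [hexp]
            apply Real.exp_le_exp.mpr
            nlinarith [hbm1.le]
          calc Real.exp (-(b * ((m:ℝ) + 1) * M)) * (∏ j, dist (ξ j) z ^ (2 * b))
              ≤ expNeg (b * (m + 1)) (A.Q z) * (∏ j, dist (ξ j) z ^ (2 * b)) :=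
                mul_le_mul_of_nonneg_right hee
                  (Finset.prod_nonneg fun j _ => Real.rpow_nonneg dist_nonneg _)
            _ = (∏ j, dist (ξ j) z ^ (2 * b)) * expNeg (b * (m + 1)) (A.Q z) := by ring
      _ ≤ ∫⁻ z : ℂ,
            ENNReal.ofReal ((∏ j, dist (ξ j) z ^ (2 * b)) * expNeg (b * (m + 1)) (A.Q z))
            ∂dA := setLIntegral_le_lintegral _ _
  -- combine
  set c : ℝ≥0∞ := ENNReal.ofReal (r ^ 2 * Real.exp (-(b * hh * ((m:ℝ) + 1)))) with hcdef
  have hZ3 : c * ∫⁻ ξ, ENNReal.ofReal (boltzW A.Q b m (m + 1) ξ) ∂(dAn m)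
      ≤ Zpart A.Q b (m + 1) := by
    rw [hZ2, ← lintegral_const_mul' c _ ENNReal.ofReal_ne_top]
    exact lintegral_mono fun ξ => hinner ξ
  have hone : ENNReal.ofReal ((r ^ 2)⁻¹ * Real.exp (b * hh * ((m:ℝ) + 1))) * c = 1 := by
    rw [hcdef, ← ENNReal.ofReal_mul (by positivity)]
    rw [show (r ^ 2)⁻¹ * Real.exp (b * hh * ((m:ℝ) + 1)) *
          (r ^ 2 * Real.exp (-(b * hh * ((m:ℝ) + 1))))
        = (r ^ 2)⁻¹ * r ^ 2 *
            (Real.exp (b * hh * ((m:ℝ) + 1)) * Real.exp (-(b * hh * ((m:ℝ) + 1))))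
      from by ring]
    rw [← Real.exp_add, add_neg_cancel, Real.exp_zero, inv_mul_cancel₀ hr2.ne', one_mul,
      ENNReal.ofReal_one]
  have hcast : ((m + 1 : ℕ) : ℝ) = (m:ℝ) + 1 := by push_cast; ring
  calc (∫⁻ ξ, ENNReal.ofReal (boltzW A.Q b m (m + 1) ξ) ∂(dAn m))
      = (ENNReal.ofReal ((r ^ 2)⁻¹ * Real.exp (b * hh * ((m:ℝ) + 1))) * c) *
          ∫⁻ ξ, ENNReal.ofReal (boltzW A.Q b m (m + 1) ξ) ∂(dAn m) := by
        rw [hone, one_mul]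
    _ = ENNReal.ofReal ((r ^ 2)⁻¹ * Real.exp (b * hh * ((m:ℝ) + 1))) *
          (c * ∫⁻ ξ, ENNReal.ofReal (boltzW A.Q b m (m + 1) ξ) ∂(dAn m)) := by
        rw [mul_assoc]
    _ ≤ ENNReal.ofReal ((r ^ 2)⁻¹ * Real.exp (b * hh * ((m:ℝ) + 1))) *
          Zpart A.Q b (m + 1) := mul_le_mul_right hZ3 _
    _ = ENNReal.ofReal ((r ^ 2)⁻¹ * Real.exp (b * hh * ((m + 1 : ℕ) : ℝ))) *
          Zpart A.Q b (m + 1) := by rw [hcast]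
end
end
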